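/- Let S : C(X,ℂ) → C(Y,ℂ) be a bijective additive map with S(1) = 1, S(r•f) = r•S(f) for all rationals r, S(conj f) = conj(S f), ‖S(fg)‖ = ‖S(f)S(g)‖ for all f, g, and suppose S maps nonnegative functions to nonnegative functions. Then ‖S(f)‖ ≤ ‖f‖ for all f ∈ C(X,ℂ). -/

import Mathlib

variable {X Y : Type*} [TopologicalSpace X] [CompactSpace X] [T2Space X]
  [TopologicalSpace Y] [CompactSpace Y] [T2Space Y]

theorem stmt10 (S : C(X, ℂ) → C(Y, ℂ)) (hbij : Function.Bijective S)
    (hadd : ∀ f g : C(X, ℂ), S (f + g) = S f + S g)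
    (hone : S 1 = 1)
    (hq : ∀ (r : ℚ) (f : C(X, ℂ)), S ((r : ℂ) • f) = (r : ℂ) • S f)
    (hstar : ∀ f : C(X, ℂ), S (star f) = star (S f))
    (hnm : ∀ f g : C(X, ℂ), ‖S (f * g)‖ = ‖S f * S g‖)
    (hpos : ∀ f : C(X, ℂ), (∀ x, (f x).im = 0 ∧ 0 ≤ (f x).re) →
      ∀ y, (S f y).im = 0 ∧ 0 ≤ (S f y).re) :
    ∀ f : C(X, ℂ), ‖S f‖ ≤ ‖f‖ := by
  have hzero : S 0 = 0 := by
    have h := hadd 0 0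
    rw [add_zero] at h
    exact (left_eq_add.mp h)
  have hneg : ∀ f : C(X, ℂ), S (-f) = -S f := by
    intro f
    have h := hadd f (-f)
    rw [add_neg_cancel, hzero] at h
    exact eq_neg_of_add_eq_zero_right h.symm
  intro f
  -- the absolute value of f as a continuous map
  set g : C(X, ℂ) := ⟨fun x => (‖f x‖ : ℂ),
    Complex.continuous_ofReal.comp (map_continuous f).norm⟩ with hg
  have hg_apply : ∀ x, g x = (‖f x‖ : ℂ) := fun x => rfl
  have hgpos : ∀ x, (g x).im = 0 ∧ 0 ≤ (g x).re := by
    intro x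
    rw [hg_apply]
    exact ⟨Complex.ofReal_im _, by rw [Complex.ofReal_re]; exact norm_nonneg _⟩
  have hSg := hpos g hgpos
  -- star (S g) = S g
  have hstarSg : star (S g) = S g := by
    ext y
    simp only [ContinuousMap.star_apply]
    exact Complex.conj_eq_iff_im.mpr (hSg y).1
  -- f * star f = g * g
  have hfg : f * star f = g * g := by
    ext x
    simp only [ContinuousMap.mul_apply, ContinuousMap.star_apply, hg_apply]
    rw [show star (f x) = (starRingEnd ℂ) (f x) from rfl, Complex.mul_conj]
    norm_cast
    rw [Complex.normSq_eq_norm_sq, sq]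
  -- ‖S f‖ = ‖S g‖
  have hkey : ‖S f‖ = ‖S g‖ := by
    have h1 : ‖S f‖ * ‖S f‖ = ‖S g‖ * ‖S g‖ := by
      calc ‖S f‖ * ‖S f‖ = ‖S f * star (S f)‖ := (CStarRing.norm_self_mul_star).symm
        _ = ‖S f * S (star f)‖ := by rw [hstar]
        _ = ‖S (f * star f)‖ := (hnm f (star f)).symm
        _ = ‖S (g * g)‖ := by rw [hfg]
        _ = ‖S g * S g‖ := hnm g g
        _ = ‖S g * star (S g)‖ := by rw [hstarSg]
        _ = ‖S g‖ * ‖S g‖ := CStarRing.norm_self_mul_star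
    exact (mul_self_inj (norm_nonneg _) (norm_nonneg _)).mp h1
  rw [hkey]
  -- now bound ‖S g‖ by any rational upper bound of ‖f‖
  have hrat : ∀ r : ℚ, ‖f‖ ≤ (r : ℝ) → ‖S g‖ ≤ (r : ℝ) := by
    intro r hr
    have hr0 : (0:ℝ) ≤ r := le_trans (norm_nonneg f) hr
    -- h := r • 1 - g is nonnegative
    have hhpos : ∀ x, (((r : ℂ) • 1 - g) x).im = 0 ∧ 0 ≤ (((r : ℂ) • 1 - g) x).re := by
      intro x
      have hx : ‖f x‖ ≤ (r : ℝ) := le_trans (ContinuousMap.norm_coe_le_norm f x) hr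
      simp only [ContinuousMap.sub_apply, ContinuousMap.smul_apply, ContinuousMap.one_apply,
        smul_eq_mul, mul_one, hg_apply, Complex.sub_im, Complex.sub_re,
        Complex.ofReal_im, Complex.ofReal_re, Complex.ratCast_im, Complex.ratCast_re]
      exact ⟨by norm_num, by linarith⟩
    have hSh := hpos _ hhpos
    have hSheq : S ((r : ℂ) • 1 - g) = (r : ℂ) • 1 - S g := by
      rw [sub_eq_add_neg, hadd, hneg, hq, hone, ← sub_eq_add_neg]
    rw [hSheq] at hSh
    apply (ContinuousMap.norm_le _ hr0).mpr
    intro y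
    obtain ⟨him, hre⟩ := hSg y
    obtain ⟨him', hre'⟩ := hSh y
    simp only [ContinuousMap.sub_apply, ContinuousMap.smul_apply, ContinuousMap.one_apply,
      smul_eq_mul, mul_one, Complex.sub_re] at hre'
    have hval : S g y = ((S g y).re : ℂ) := by
      rw [Complex.ext_iff]; simp [him]
    rw [hval, Complex.norm_real, Real.norm_eq_abs, abs_of_nonneg hre]
    simp only [Complex.ratCast_re] at hre'
    linarith
  by_contra hcon
  push_neg at hcon
  obtain ⟨r, hr1, hr2⟩ := exists_rat_btwn hcon
  exact absurd (hrat r hr1.le) (not_le.mpr hr2)
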